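/- Every operation of a thermal instrument is time-translation covariant: if I = {I_x} is a thermal instrument for system Hamiltonian H_S, then I_x(e^{−it H_S} ρ e^{it H_S}) = e^{−it H_S} I_x(ρ) e^{it H_S} for all states ρ, outcomes x, and times t. -/

import Mathlib

open Matrix Kronecker ComplexOrder

/-- Completely positive map, via Kraus representation (equivalent in finite dimension). -/
def IsCP {d : Type*} [Fintype d] [DecidableEq d]
    (Φ : Matrix d d ℂ → Matrix d d ℂ) : Prop :=
  ∃ (m : ℕ) (K : Fin m → Matrix d d ℂ), ∀ A, Φ A = ∑ i, K i * A * (K i)ᴴ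

/-- Trace-preserving map. -/
def IsTP {d : Type*} [Fintype d] [DecidableEq d]
    (Φ : Matrix d d ℂ → Matrix d d ℂ) : Prop :=
  ∀ A, (Φ A).trace = A.trace

/-- Unital map. -/
def IsUnital {d : Type*} [Fintype d] [DecidableEq d]
    (Φ : Matrix d d ℂ → Matrix d d ℂ) : Prop :=
  Φ 1 = 1

/-- `Φd` is the Heisenberg dual of `Φ`, defined by trace duality. -/
def IsDual {d : Type*} [Fintype d] [DecidableEq d]
    (Φ Φd : Matrix d d ℂ → Matrix d d ℂ) : Prop :=
  ∀ A B, (A * Φ B).trace = (Φd A * B).trace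

/-- Gibbs state `e^{-βH}/tr[e^{-βH}]`. -/
noncomputable def gibbs {d : Type*} [Fintype d] [DecidableEq d]
    (H : Matrix d d ℂ) (β : ℝ) : Matrix d d ℂ :=
  ((NormedSpace.exp ((-β : ℂ) • H)).trace)⁻¹ • NormedSpace.exp ((-β : ℂ) • H)

/-- Partial trace over the second (probe) factor. -/
noncomputable def ptraceA {ns na : ℕ}
    (M : Matrix (Fin ns × Fin na) (Fin ns × Fin na) ℂ) : Matrix (Fin ns) (Fin ns) ℂ :=
  fun i j => ∑ k, M (i, k) (j, k)

/-- The unitary one-parameter group `e^{-itH}`. -/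
noncomputable def timeEv {d : Type*} [Fintype d] [DecidableEq d]
    (H : Matrix d d ℂ) (t : ℝ) : Matrix d d ℂ :=
  NormedSpace.exp ((-(Complex.I * t)) • H)

/-- The inverse unitary `e^{itH}`. -/
noncomputable def timeEvInv {d : Type*} [Fintype d] [DecidableEq d]
    (H : Matrix d d ℂ) (t : ℝ) : Matrix d d ℂ :=
  NormedSpace.exp ((Complex.I * t) • H)


section ThermalAux

open NormedSpace

/-- A matrix is determined by its trace pairings. -/
lemma ext_of_trace {d : Type*} [Fintype d] [DecidableEq d] (M N : Matrix d d ℂ)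
    (h : ∀ A : Matrix d d ℂ, (A * M).trace = (A * N).trace) : M = N := by
  ext i j
  have := h (Matrix.single j i 1)
  simpa [Matrix.trace, Matrix.diag, Matrix.mul_apply, Matrix.single, ite_and,
    Finset.sum_ite_eq, Finset.sum_ite_eq'] using this

lemma trace_self_mul_conjT {d : Type*} [Fintype d] [DecidableEq d] (M : Matrix d d ℂ) :
    (M * Mᴴ).trace = ((∑ p, ∑ q, Complex.normSq (M p q) : ℝ) : ℂ) := by
  simp [Matrix.trace, Matrix.diag, Matrix.mul_apply, Matrix.conjTranspose_apply,
    Complex.mul_conj]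

/-- Kraus operators of a unital, trace-preserving CP map fixing a hermitian `H`
commute with `H`. -/
lemma kraus_commute {d : Type*} [Fintype d] [DecidableEq d] {m : ℕ}
    (K : Fin m → Matrix d d ℂ) (H : Matrix d d ℂ) (hH : H.IsHermitian)
    (hTP : ∀ A : Matrix d d ℂ, (∑ i, K i * A * (K i)ᴴ).trace = A.trace)
    (hone : ∑ i, K i * (K i)ᴴ = 1)
    (hfix : ∑ i, K i * H * (K i)ᴴ = H) :
    ∀ i, K i * H = H * K i := by
  set D : Fin m → Matrix d d ℂ := fun i => K i * H - H * K i with hD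
  have hHc : Hᴴ = H := hH
  have expand : ∀ i, D i * (D i)ᴴ =
      K i * (H * H) * (K i)ᴴ - (K i * H * (K i)ᴴ) * H - H * (K i * H * (K i)ᴴ)
        + H * (K i * (K i)ᴴ) * H := by
    intro i
    simp only [hD, Matrix.conjTranspose_sub, Matrix.conjTranspose_mul, hHc]
    noncomm_ring
  have hsum : ∑ i, D i * (D i)ᴴ = (∑ i, K i * (H * H) * (K i)ᴴ) - H * H := by
    rw [Finset.sum_congr rfl fun i _ => expand i]
    simp only [Finset.sum_sub_distrib, Finset.sum_add_distrib, ← Finset.sum_mul,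
      ← Finset.mul_sum, hfix, hone]
    noncomm_ring
  have htr : (∑ i, D i * (D i)ᴴ).trace = 0 := by
    rw [hsum, Matrix.trace_sub, hTP (H * H), sub_self]
  have htr' : ∑ i, ((∑ p, ∑ q, Complex.normSq (D i p q) : ℝ) : ℂ) = 0 := by
    rw [← Finset.sum_congr rfl fun i _ => trace_self_mul_conjT (D i), ← Matrix.trace_sum, htr]
  have hreal : ∑ i, (∑ p, ∑ q, Complex.normSq (D i p q) : ℝ) = 0 := by
    exact_mod_cast htr'
  have hnn : ∀ i ∈ Finset.univ, (0:ℝ) ≤ ∑ p, ∑ q, Complex.normSq (D i p q) :=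
    fun i _ => Finset.sum_nonneg fun p _ => Finset.sum_nonneg fun q _ => Complex.normSq_nonneg _
  have hzero := (Finset.sum_eq_zero_iff_of_nonneg hnn).mp hreal
  intro i
  have hi : ∀ p q, D i p q = 0 := by
    intro p q
    have h1 := hzero i (Finset.mem_univ i)
    have h2 := (Finset.sum_eq_zero_iff_of_nonneg
      (fun p _ => Finset.sum_nonneg fun q _ => Complex.normSq_nonneg (D i p q))).mp h1 p
      (Finset.mem_univ p)
    have h3 := (Finset.sum_eq_zero_iff_of_nonneg
      (fun q _ => Complex.normSq_nonneg (D i p q))).mp h2 q (Finset.mem_univ q)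
    exact Complex.normSq_eq_zero.mp h3
  have hDi : D i = 0 := by ext p q; exact hi p q
  exact sub_eq_zero.mp hDi

/-- Covariance of a Kraus-form map whose Kraus operators commute with `H`. -/
lemma kraus_cov {d : Type*} [Fintype d] [DecidableEq d] {m : ℕ}
    (K : Fin m → Matrix d d ℂ) (H : Matrix d d ℂ) (hH : H.IsHermitian)
    (hcomm : ∀ i, K i * H = H * K i) (c c' : ℂ) (A : Matrix d d ℂ) :
    ∑ i, K i * (exp (c • H) * A * exp (c' • H)) * (K i)ᴴ
      = exp (c • H) * (∑ i, K i * A * (K i)ᴴ) * exp (c' • H) := by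
  have h1 : ∀ i, K i * exp (c • H) = exp (c • H) * K i := fun i =>
    ((Commute.smul_right (hcomm i) c).exp_right)
  have h2 : ∀ i, (K i)ᴴ * exp (c' • H) = exp (c' • H) * (K i)ᴴ := by
    intro i
    have hcT : (K i)ᴴ * H = H * (K i)ᴴ := by
      have := congrArg Matrix.conjTranspose (hcomm i)
      simpa [Matrix.conjTranspose_mul, hH.eq] using this.symm
    exact ((Commute.smul_right hcT c').exp_right)
  have hterm : ∀ i, K i * (exp (c • H) * A * exp (c' • H)) * (K i)ᴴ
      = exp (c • H) * (K i * A * (K i)ᴴ) * exp (c' • H) := by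
    intro i
    calc K i * (exp (c • H) * A * exp (c' • H)) * (K i)ᴴ
        = (K i * exp (c • H)) * A * (exp (c' • H) * (K i)ᴴ) := by noncomm_ring
      _ = (exp (c • H) * K i) * A * ((K i)ᴴ * exp (c' • H)) := by rw [h1, ← h2]
      _ = exp (c • H) * (K i * A * (K i)ᴴ) * exp (c' • H) := by noncomm_ring
  rw [Finset.sum_congr rfl fun i _ => hterm i]
  rw [← Finset.sum_mul, ← Finset.mul_sum]

/-- Transfer covariance from the dual channel to the channel itself. -/
lemma chan_cov {d : Type*} [Fintype d] [DecidableEq d]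
    (E Ed : Matrix d d ℂ → Matrix d d ℂ) (hDual : IsDual E Ed)
    (V W : Matrix d d ℂ)
    (hEd : ∀ A, Ed (W * A * V) = W * Ed A * V) (X : Matrix d d ℂ) :
    E (V * X * W) = V * E X * W := by
  apply ext_of_trace
  intro A
  calc (A * E (V * X * W)).trace = (Ed A * (V * X * W)).trace := hDual _ _
    _ = ((W * Ed A * V) * X).trace := by
        rw [show Ed A * (V * X * W) = (Ed A * V * X) * W from by noncomm_ring,
          Matrix.trace_mul_comm,
          show W * (Ed A * V * X) = (W * Ed A * V) * X from by noncomm_ring]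
    _ = (Ed (W * A * V) * X).trace := by rw [hEd]
    _ = ((W * A * V) * E X).trace := (hDual _ _).symm
    _ = (A * (V * E X * W)).trace := by
        rw [show (W * A * V) * E X = W * (A * V * E X) from by noncomm_ring,
          Matrix.trace_mul_comm,
          show (A * V * E X) * W = A * (V * E X * W) from by noncomm_ring]

lemma kron_conjTranspose {l m n p : Type*}
    (A : Matrix l m ℂ) (B : Matrix n p ℂ) : (A ⊗ₖ B)ᴴ = Aᴴ ⊗ₖ Bᴴ := by
  ext ⟨i, k⟩ ⟨j, l'⟩
  simp [Matrix.conjTranspose_apply, Matrix.kroneckerMap_apply, star_mul']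

noncomputable def kronR (na : ℕ) {ns : ℕ} :
    Matrix (Fin ns) (Fin ns) ℂ →+* Matrix (Fin ns × Fin na) (Fin ns × Fin na) ℂ where
  toFun A := A ⊗ₖ (1 : Matrix (Fin na) (Fin na) ℂ)
  map_one' := Matrix.one_kronecker_one
  map_mul' A B := by rw [← Matrix.mul_kronecker_mul, one_mul]
  map_zero' := Matrix.zero_kronecker _
  map_add' A B := Matrix.add_kronecker _ _ _

noncomputable def kronL (ns : ℕ) {na : ℕ} :
    Matrix (Fin na) (Fin na) ℂ →+* Matrix (Fin ns × Fin na) (Fin ns × Fin na) ℂ where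
  toFun B := (1 : Matrix (Fin ns) (Fin ns) ℂ) ⊗ₖ B
  map_one' := Matrix.one_kronecker_one
  map_mul' A B := by rw [← Matrix.mul_kronecker_mul, one_mul]
  map_zero' := Matrix.kronecker_zero _
  map_add' A B := Matrix.kronecker_add _ _ _

lemma continuous_kronR {ns na : ℕ} : Continuous (kronR na (ns := ns)) := by
  apply continuous_matrix
  rintro ⟨i, k⟩ ⟨j, l⟩
  show Continuous fun A : Matrix (Fin ns) (Fin ns) ℂ =>
    A i j * (1 : Matrix (Fin na) (Fin na) ℂ) k l
  exact (continuous_id.matrix_elem i j).mul continuous_const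

lemma continuous_kronL {ns na : ℕ} : Continuous (kronL ns (na := na)) := by
  apply continuous_matrix
  rintro ⟨i, k⟩ ⟨j, l⟩
  show Continuous fun B : Matrix (Fin na) (Fin na) ℂ =>
    (1 : Matrix (Fin ns) (Fin ns) ℂ) i j * B k l
  exact continuous_const.mul (continuous_id.matrix_elem k l)

lemma exp_kron_one {ns na : ℕ} (A : Matrix (Fin ns) (Fin ns) ℂ) :
    exp (A ⊗ₖ (1 : Matrix (Fin na) (Fin na) ℂ)) = exp A ⊗ₖ 1 := by
  letI : NormedRing (Matrix (Fin ns) (Fin ns) ℂ) := Matrix.linftyOpNormedRing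
  letI : NormedAlgebra ℂ (Matrix (Fin ns) (Fin ns) ℂ) := Matrix.linftyOpNormedAlgebra
  letI : NormedRing (Matrix (Fin ns × Fin na) (Fin ns × Fin na) ℂ) := Matrix.linftyOpNormedRing
  letI : NormedAlgebra ℂ (Matrix (Fin ns × Fin na) (Fin ns × Fin na) ℂ) :=
    Matrix.linftyOpNormedAlgebra
  letI : NormedAlgebra ℚ (Matrix (Fin ns) (Fin ns) ℂ) := NormedAlgebra.restrictScalars ℚ ℂ _
  exact (map_exp (kronR na) continuous_kronR A).symm

lemma exp_one_kron {ns na : ℕ} (B : Matrix (Fin na) (Fin na) ℂ) :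
    exp ((1 : Matrix (Fin ns) (Fin ns) ℂ) ⊗ₖ B)
      = (1 : Matrix (Fin ns) (Fin ns) ℂ) ⊗ₖ exp B := by
  letI : NormedRing (Matrix (Fin na) (Fin na) ℂ) := Matrix.linftyOpNormedRing
  letI : NormedAlgebra ℂ (Matrix (Fin na) (Fin na) ℂ) := Matrix.linftyOpNormedAlgebra
  letI : NormedRing (Matrix (Fin ns × Fin na) (Fin ns × Fin na) ℂ) := Matrix.linftyOpNormedRing
  letI : NormedAlgebra ℂ (Matrix (Fin ns × Fin na) (Fin ns × Fin na) ℂ) :=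
    Matrix.linftyOpNormedAlgebra
  letI : NormedAlgebra ℚ (Matrix (Fin na) (Fin na) ℂ) := NormedAlgebra.restrictScalars ℚ ℂ _
  exact (map_exp (kronL ns) continuous_kronL B).symm

lemma exp_kron_sum {ns na : ℕ} (HS : Matrix (Fin ns) (Fin ns) ℂ)
    (HA : Matrix (Fin na) (Fin na) ℂ) (c : ℂ) :
    exp (c • (HS ⊗ₖ (1 : Matrix (Fin na) (Fin na) ℂ)
        + (1 : Matrix (Fin ns) (Fin ns) ℂ) ⊗ₖ HA))
      = exp (c • HS) ⊗ₖ exp (c • HA) := by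
  have hcomm : Commute (c • (HS ⊗ₖ (1 : Matrix (Fin na) (Fin na) ℂ)))
      (c • ((1 : Matrix (Fin ns) (Fin ns) ℂ) ⊗ₖ HA)) := by
    apply Commute.smul_left; apply Commute.smul_right
    show _ * _ = _ * _
    rw [← Matrix.mul_kronecker_mul, ← Matrix.mul_kronecker_mul, one_mul, mul_one, one_mul,
      mul_one]
  rw [smul_add, Matrix.exp_add_of_commute _ _ hcomm, ← Matrix.smul_kronecker,
    ← Matrix.kronecker_smul, exp_kron_one, exp_one_kron, ← Matrix.mul_kronecker_mul,
    one_mul, mul_one]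

lemma timeEv_mul_inv {d : Type*} [Fintype d] [DecidableEq d] (H : Matrix d d ℂ) (t : ℝ) :
    timeEv H t * timeEvInv H t = 1 := by
  rw [timeEv, timeEvInv, ← Matrix.exp_add_of_commute _ _
    (Commute.smul_left (Commute.smul_right (Commute.refl H) _) _), ← add_smul]
  norm_num

lemma timeEvInv_mul {d : Type*} [Fintype d] [DecidableEq d] (H : Matrix d d ℂ) (t : ℝ) :
    timeEvInv H t * timeEv H t = 1 := by
  rw [timeEv, timeEvInv, ← Matrix.exp_add_of_commute _ _
    (Commute.smul_left (Commute.smul_right (Commute.refl H) _) _), ← add_smul]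
  norm_num

lemma timeEv_gibbs {d : Type*} [Fintype d] [DecidableEq d] (H : Matrix d d ℂ) (β : ℝ) (t : ℝ) :
    timeEv H t * gibbs H β * timeEvInv H t = gibbs H β := by
  have hc : timeEv H t * exp ((-β : ℂ) • H) = exp ((-β : ℂ) • H) * timeEv H t := by
    exact ((Commute.smul_right (Commute.smul_left (Commute.refl H) _) _).exp).symm
  rw [gibbs, mul_smul_comm, Matrix.smul_mul, hc, mul_assoc, timeEv_mul_inv, mul_one]

lemma ptraceA_mulL {ns na : ℕ} (A : Matrix (Fin ns) (Fin ns) ℂ)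
    (M : Matrix (Fin ns × Fin na) (Fin ns × Fin na) ℂ) :
    ptraceA ((A ⊗ₖ (1 : Matrix (Fin na) (Fin na) ℂ)) * M) = A * ptraceA M := by
  funext i j
  show ∑ k, ∑ pq : Fin ns × Fin na,
      (A ⊗ₖ (1 : Matrix (Fin na) (Fin na) ℂ)) (i,k) pq * M pq (j,k)
      = ∑ p, A i p * ∑ k, M (p,k) (j,k)
  simp only [Fintype.sum_prod_type, Matrix.kroneckerMap_apply, Matrix.one_apply,
    mul_ite, mul_one, mul_zero, ite_mul, zero_mul, Finset.sum_ite_irrel, Finset.sum_const_zero,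
    Finset.sum_ite_eq, Finset.sum_ite_eq', Finset.mem_univ, if_true, Finset.mul_sum]
  exact Finset.sum_comm

lemma ptraceA_mulR {ns na : ℕ} (C : Matrix (Fin ns) (Fin ns) ℂ)
    (M : Matrix (Fin ns × Fin na) (Fin ns × Fin na) ℂ) :
    ptraceA (M * (C ⊗ₖ (1 : Matrix (Fin na) (Fin na) ℂ))) = ptraceA M * C := by
  funext i j
  show ∑ k, ∑ pq : Fin ns × Fin na,
      M (i,k) pq * (C ⊗ₖ (1 : Matrix (Fin na) (Fin na) ℂ)) pq (j,k)
      = ∑ p, (∑ k, M (i,k) (p,k)) * C p j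
  simp only [Fintype.sum_prod_type, Matrix.kroneckerMap_apply, Matrix.one_apply,
    mul_ite, mul_one, mul_zero, ite_mul, zero_mul, Finset.sum_ite_irrel, Finset.sum_const_zero,
    Finset.sum_ite_eq, Finset.sum_ite_eq', Finset.mem_univ, if_true, Finset.sum_mul]
  exact Finset.sum_comm

lemma ptraceA_comm {ns na : ℕ} (B : Matrix (Fin na) (Fin na) ℂ)
    (M : Matrix (Fin ns × Fin na) (Fin ns × Fin na) ℂ) :
    ptraceA (((1 : Matrix (Fin ns) (Fin ns) ℂ) ⊗ₖ B) * M)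
      = ptraceA (M * ((1 : Matrix (Fin ns) (Fin ns) ℂ) ⊗ₖ B)) := by
  funext i j
  show ∑ k, ∑ pq : Fin ns × Fin na,
      ((1 : Matrix (Fin ns) (Fin ns) ℂ) ⊗ₖ B) (i,k) pq * M pq (j,k)
      = ∑ k, ∑ pq : Fin ns × Fin na,
      M (i,k) pq * ((1 : Matrix (Fin ns) (Fin ns) ℂ) ⊗ₖ B) pq (j,k)
  simp only [Fintype.sum_prod_type, Matrix.kroneckerMap_apply, Matrix.one_apply, one_mul,
    mul_ite, mul_one, mul_zero, ite_mul, zero_mul, Finset.sum_ite_irrel, Finset.sum_const_zero,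
    Finset.sum_ite_eq, Finset.sum_ite_eq', Finset.mem_univ, if_true]
  rw [Finset.sum_comm]
  exact Finset.sum_congr rfl fun q _ => Finset.sum_congr rfl fun k _ => mul_comm _ _

end ThermalAux

/-- Every operation of a thermal instrument is time-translation covariant:
`I_x(e^{-itH_S} ρ e^{itH_S}) = e^{-itH_S} I_x(ρ) e^{itH_S}` for all `ρ`, `x`, `t`. -/
theorem thermal_instrument_covariant {ns na N : ℕ}
    (HS : Matrix (Fin ns) (Fin ns) ℂ) (hHS : HS.IsHermitian)
    (HA : Matrix (Fin na) (Fin na) ℂ) (hHA : HA.IsHermitian)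
    (β : ℝ) (hβ : 0 < β)
    (E Ed : Matrix (Fin ns × Fin na) (Fin ns × Fin na) ℂ →
            Matrix (Fin ns × Fin na) (Fin ns × Fin na) ℂ)
    (hCP : IsCP E) (hTP : IsTP E) (hU : IsUnital E)
    (hdCP : IsCP Ed) (hdTP : IsTP Ed) (hdU : IsUnital Ed)
    (hDual : IsDual E Ed)
    (hfix : Ed (HS ⊗ₖ 1 + 1 ⊗ₖ HA) = HS ⊗ₖ 1 + 1 ⊗ₖ HA)
    (Z : Fin N → Matrix (Fin na) (Fin na) ℂ)
    (hZpos : ∀ x, (Z x).PosSemidef) (hZsum : ∑ x, Z x = 1)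
    (hYanase : ∀ x, Z x * HA = HA * Z x)
    (Inst : Fin N → Matrix (Fin ns) (Fin ns) ℂ → Matrix (Fin ns) (Fin ns) ℂ)
    (hInst : ∀ x ρ, Inst x ρ = ptraceA ((1 ⊗ₖ Z x) * E (ρ ⊗ₖ gibbs HA β)))
    :
    ∀ (x : Fin N) (ρ : Matrix (Fin ns) (Fin ns) ℂ) (t : ℝ),
      Inst x (timeEv HS t * ρ * timeEvInv HS t) =
        timeEv HS t * Inst x ρ * timeEvInv HS t := by
  intro x ρ t
  classical
  obtain ⟨mD, KD, hKD⟩ := hdCP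
  set HT : Matrix (Fin ns × Fin na) (Fin ns × Fin na) ℂ := HS ⊗ₖ 1 + 1 ⊗ₖ HA with hHT
  have hHTherm : HT.IsHermitian := by
    unfold HT
    unfold Matrix.IsHermitian
    rw [Matrix.conjTranspose_add, kron_conjTranspose, kron_conjTranspose, hHS.eq, hHA.eq,
      Matrix.conjTranspose_one, Matrix.conjTranspose_one]
  -- Kraus operators of the dual channel commute with the total Hamiltonian
  have hTPK : ∀ A, (∑ i, KD i * A * (KD i)ᴴ).trace = A.trace := by
    intro A; rw [← hKD]; exact hdTP A
  have honeK : ∑ i, KD i * (KD i)ᴴ = 1 := by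
    have h := hdU
    rw [IsUnital, hKD] at h
    simpa using h
  have hfixK : ∑ i, KD i * HT * (KD i)ᴴ = HT := by
    rw [← hKD]; exact hfix
  have hcommK := kraus_commute KD HT hHTherm hTPK honeK hfixK
  have hEdcov : ∀ (c c' : ℂ) (A : Matrix (Fin ns × Fin na) (Fin ns × Fin na) ℂ),
      Ed (NormedSpace.exp (c • HT) * A * NormedSpace.exp (c' • HT))
        = NormedSpace.exp (c • HT) * Ed A * NormedSpace.exp (c' • HT) := by
    intro c c' A
    rw [hKD, hKD]
    exact kraus_cov KD HT hHTherm hcommK c c' A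
  -- covariance of `E` itself, for the time-evolution unitaries
  have hEcov : ∀ X, E (timeEv HT t * X * timeEvInv HT t)
      = timeEv HT t * E X * timeEvInv HT t := by
    intro X
    exact chan_cov E Ed hDual (timeEv HT t) (timeEvInv HT t)
      (fun A => hEdcov (Complex.I * t) (-(Complex.I * t)) A) X
  -- splitting of the total time evolution
  have hVsplit : timeEv HT t = timeEv HS t ⊗ₖ timeEv HA t := by
    rw [timeEv, timeEv, timeEv, hHT]
    exact exp_kron_sum HS HA _
  have hWsplit : timeEvInv HT t = timeEvInv HS t ⊗ₖ timeEvInv HA t := by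
    rw [timeEvInv, timeEvInv, timeEvInv, hHT]
    exact exp_kron_sum HS HA _
  -- the pointer commutes with the probe time evolution
  have hZV : Z x * timeEv HA t = timeEv HA t * Z x :=
    ((Commute.smul_right (hYanase x) _).exp_right)
  rw [hInst, hInst]
  have harg : (timeEv HS t * ρ * timeEvInv HS t) ⊗ₖ gibbs HA β
      = timeEv HT t * (ρ ⊗ₖ gibbs HA β) * timeEvInv HT t := by
    rw [hVsplit, hWsplit]
    conv_lhs => rw [← timeEv_gibbs HA β t]
    rw [Matrix.mul_kronecker_mul, Matrix.mul_kronecker_mul]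
  rw [harg, hEcov]
  set M0 := E (ρ ⊗ₖ gibbs HA β) with hM0
  have hcommZ : (1 ⊗ₖ Z x) * (timeEv HT t * M0 * timeEvInv HT t)
      = timeEv HT t * ((1 ⊗ₖ Z x) * M0) * timeEvInv HT t := by
    have h1 : ((1 : Matrix (Fin ns) (Fin ns) ℂ) ⊗ₖ Z x) * timeEv HT t
        = timeEv HT t * (1 ⊗ₖ Z x) := by
      rw [hVsplit, ← Matrix.mul_kronecker_mul, ← Matrix.mul_kronecker_mul, one_mul, mul_one,
        hZV]
    calc (1 ⊗ₖ Z x) * (timeEv HT t * M0 * timeEvInv HT t)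
        = ((1 ⊗ₖ Z x) * timeEv HT t) * M0 * timeEvInv HT t := by noncomm_ring
      _ = (timeEv HT t * (1 ⊗ₖ Z x)) * M0 * timeEvInv HT t := by rw [h1]
      _ = timeEv HT t * ((1 ⊗ₖ Z x) * M0) * timeEvInv HT t := by noncomm_ring
  rw [hcommZ]
  set N := (1 ⊗ₖ Z x) * M0 with hN
  -- now peel off the partial trace
  have hsplitV : timeEv HT t
      = (timeEv HS t ⊗ₖ (1 : Matrix (Fin na) (Fin na) ℂ))
        * ((1 : Matrix (Fin ns) (Fin ns) ℂ) ⊗ₖ timeEv HA t) := by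
    rw [hVsplit, ← Matrix.mul_kronecker_mul, one_mul, mul_one]
  have hsplitW : timeEvInv HT t
      = ((1 : Matrix (Fin ns) (Fin ns) ℂ) ⊗ₖ timeEvInv HA t)
        * (timeEvInv HS t ⊗ₖ (1 : Matrix (Fin na) (Fin na) ℂ)) := by
    rw [hWsplit, ← Matrix.mul_kronecker_mul, one_mul, mul_one]
  rw [hsplitV, hsplitW]
  have hassoc : (timeEv HS t ⊗ₖ (1 : Matrix (Fin na) (Fin na) ℂ))
        * ((1 : Matrix (Fin ns) (Fin ns) ℂ) ⊗ₖ timeEv HA t) * N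
        * (((1 : Matrix (Fin ns) (Fin ns) ℂ) ⊗ₖ timeEvInv HA t)
          * (timeEvInv HS t ⊗ₖ (1 : Matrix (Fin na) (Fin na) ℂ)))
      = (timeEv HS t ⊗ₖ (1 : Matrix (Fin na) (Fin na) ℂ))
        * (((1 : Matrix (Fin ns) (Fin ns) ℂ) ⊗ₖ timeEv HA t)
          * (N * ((1 : Matrix (Fin ns) (Fin ns) ℂ) ⊗ₖ timeEvInv HA t)))
        * (timeEvInv HS t ⊗ₖ (1 : Matrix (Fin na) (Fin na) ℂ)) := by
    noncomm_ring
  rw [hassoc, ptraceA_mulR, ptraceA_mulL, ptraceA_comm, mul_assoc N,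
    ← Matrix.mul_kronecker_mul, one_mul, timeEvInv_mul, Matrix.one_kronecker_one, mul_one,
    mul_assoc]
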